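/- Let (X, 𝔸, d) be a complete C*-algebra-valued b-metric space with coefficient A, endowed with a directed graph G with V(G) = X whose edge set contains all loops, and let f : X → X satisfy d(fx, fy) ⪯ B(d(fx, x) + d(fy, y)) for all x, y ∈ X with (x, y) ∈ E(G̃), where B is a positive element of 𝔸 commuting with every element of 𝔸 and ‖AB‖ < 1/2. Suppose (X, 𝔸, d, G) has property (P3). Then: (i) if C_f ≠ ∅, then f has a fixed point in X; (ii) if moreover the graph G has property (P4), then f has a unique fixed point in X. -/

import Mathlib

open scoped NNReal ENNReal

private lemma norm_conj_le' {𝔸 : Type*} [CStarAlgebra 𝔸] [Nontrivial 𝔸] (u : 𝔸ˣ) {x : 𝔸}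
    (hx : IsSelfAdjoint x) (z : 𝔸) (h : (u : 𝔸) * z * ↑u⁻¹ = x) : ‖x‖ ≤ ‖z‖ := by
  have h1 : spectralRadius ℂ x = spectralRadius ℂ z := by
    rw [← h]
    simp only [spectralRadius, spectrum.units_conjugate]
  have h2 : (‖x‖₊ : ℝ≥0∞) ≤ (‖z‖₊ : ℝ≥0∞) := by
    rw [← hx.spectralRadius_eq_nnnorm, h1]
    exact spectrum.spectralRadius_le_nnnorm z
  exact_mod_cast h2


private lemma le_mul_left' {𝔸 : Type*} [CStarAlgebra 𝔸] [PartialOrder 𝔸] [StarOrderedRing 𝔸]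
    {A B : 𝔸} (hA_one : (1 : 𝔸) ≤ A) (hB : 0 ≤ B) (hc : ∀ a, B * a = a * B) : B ≤ A * B := by
  have h0 : (0:𝔸) ≤ A - 1 := sub_nonneg.mpr hA_one
  have hS0 : (0:𝔸) ≤ CFC.sqrt (A - 1) := CFC.sqrt_nonneg _
  set S := CFC.sqrt (A - 1) with hSdef
  have hSS : S * S = A - 1 := CFC.sqrt_mul_sqrt_self _ h0
  have hpos : 0 ≤ star S * B * S := star_left_conjugate_nonneg hB S
  have hSsa : star S = S := (IsSelfAdjoint.of_nonneg hS0).star_eq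
  have heq : star S * B * S = A * B - B := by
    rw [hSsa, ← hc S, mul_assoc, hSS, mul_sub, mul_one, hc A]
  rw [heq] at hpos
  exact sub_nonneg.mp hpos

private lemma key_estimate {𝔸 : Type*} [CStarAlgebra 𝔸] [Nontrivial 𝔸] [PartialOrder 𝔸]
    [StarOrderedRing 𝔸] {A B w dn u v : 𝔸}
    (hA_one : (1:𝔸) ≤ A) (hB_pos : 0 ≤ B) (hB_central : ∀ a, B * a = a * B)
    (hw : 0 ≤ w) (hu0 : 0 ≤ u) (hv0 : 0 ≤ v)
    (h1 : u ≤ B * (w + dn)) (h2 : w ≤ A * (u + v)) :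
    ‖w‖ ≤ ‖A * B‖ * ‖w‖ + ‖CFC.sqrt A‖ * ‖B‖ * ‖CFC.sqrt A‖ * ‖dn‖
      + ‖CFC.sqrt A‖ * ‖CFC.sqrt A‖ * ‖v‖ := by
  have hA0 : (0:𝔸) ≤ A := zero_le_one.trans hA_one
  have hT0 : (0:𝔸) ≤ CFC.sqrt A := CFC.sqrt_nonneg _
  set T := CFC.sqrt A with hTdef
  have hTsa : star T = T := (IsSelfAdjoint.of_nonneg hT0).star_eq
  have hTT : T * T = A := CFC.sqrt_mul_sqrt_self A hA0
  obtain ⟨uA, huA⟩ : IsUnit A := CStarAlgebra.isUnit_of_le 1 hA_one isStrictlyPositive_one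
  have hTA : T * A = A * T := by rw [← hTT]; noncomm_ring
  have hcomm : Commute (↑uA⁻¹ : 𝔸) T := by
    have hc : Commute (↑uA : 𝔸) T := by
      show (↑uA : 𝔸) * T = T * ↑uA
      rw [huA]; exact hTA.symm
    exact hc.units_inv_left
  have hinvA : (↑uA⁻¹ : 𝔸) * A = 1 := by rw [← huA]; exact uA.inv_mul
  have hiT1 : (↑uA⁻¹ * T) * T = 1 := by rw [mul_assoc, hTT, hinvA]
  have hT1i : T * (↑uA⁻¹ * T) = 1 := by rw [← mul_assoc, ← hcomm.eq, mul_assoc, hTT, hinvA]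
  let tu : 𝔸ˣ := ⟨T, ↑uA⁻¹ * T, hT1i, hiT1⟩
  -- step a
  have hAc0 : 0 ≤ A * (u + v) := hw.trans h2
  have h_a : ‖w‖ ≤ ‖A * (u + v)‖ := CStarAlgebra.norm_le_norm_of_nonneg_of_le hw h2
  -- step b
  have h_b : ‖A * (u + v)‖ ≤ ‖T * (u + v) * T‖ := by
    refine norm_conj_le' tu (IsSelfAdjoint.of_nonneg hAc0) _ ?_
    show T * (T * (u + v) * T) * (↑uA⁻¹ * T) = A * (u + v)
    calc T * (T * (u + v) * T) * (↑uA⁻¹ * T)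
        = (T * T) * (u + v) * (T * (↑uA⁻¹ * T)) := by noncomm_ring
      _ = A * (u + v) := by rw [hTT, hT1i, mul_one]
  -- step c
  have hTc0 : 0 ≤ T * (u + v) * T := by
    have := star_left_conjugate_nonneg (add_nonneg hu0 hv0) T
    rwa [hTsa] at this
  have hconj : T * (u + v) * T ≤ T * (B * (w + dn) + v) * T := by
    have := star_left_conjugate_le_conjugate (add_le_add h1 (le_refl v)) T
    rwa [hTsa] at this
  have h_c : ‖T * (u + v) * T‖ ≤ ‖T * (B * (w + dn) + v) * T‖ :=
    CStarAlgebra.norm_le_norm_of_nonneg_of_le hTc0 hconj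
  have hsplit : T * (B * (w + dn) + v) * T = T * (B * w) * T + T * (B * dn) * T + T * v * T := by
    noncomm_ring
  have h_d : ‖T * (B * (w + dn) + v) * T‖
      ≤ ‖T * (B * w) * T‖ + ‖T * (B * dn) * T‖ + ‖T * v * T‖ := by
    rw [hsplit]; exact norm_add₃_le
  -- term 1
  have hsw0 : (0:𝔸) ≤ CFC.sqrt w := CFC.sqrt_nonneg _
  set sw := CFC.sqrt w with hswdef
  have hswsa : star sw = sw := (IsSelfAdjoint.of_nonneg hsw0).star_eq
  have hsws : sw * sw = w := CFC.sqrt_mul_sqrt_self w hw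
  have hM_eq : star (sw * T) * B * (sw * T) = T * (B * w) * T := by
    rw [star_mul, hswsa, hTsa]
    have hkey : sw * B * sw = B * (sw * sw) := by rw [← hB_central sw, mul_assoc]
    calc T * sw * B * (sw * T) = T * (sw * B * sw) * T := by noncomm_ring
      _ = T * (B * (sw * sw)) * T := by rw [hkey]
      _ = T * (B * w) * T := by rw [hsws]
  have hM0 : 0 ≤ T * (B * w) * T := hM_eq ▸ star_left_conjugate_nonneg hB_pos (sw * T)
  have h_e : ‖T * (B * w) * T‖ ≤ ‖A * B * w‖ := by
    refine norm_conj_le' tu⁻¹ (IsSelfAdjoint.of_nonneg hM0) _ ?_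
    show (↑uA⁻¹ * T) * (A * B * w) * ↑(tu⁻¹)⁻¹ = T * (B * w) * T
    rw [inv_inv]
    show (↑uA⁻¹ * T) * (A * B * w) * T = T * (B * w) * T
    calc (↑uA⁻¹ * T) * (A * B * w) * T
        = ↑uA⁻¹ * ((T * A) * ((B * w) * T)) := by noncomm_ring
      _ = ↑uA⁻¹ * ((A * T) * ((B * w) * T)) := by rw [hTA]
      _ = (↑uA⁻¹ * A) * (T * ((B * w) * T)) := by noncomm_ring
      _ = T * (B * w) * T := by rw [hinvA, one_mul, ← mul_assoc]
  have h_f : ‖A * B * w‖ ≤ ‖A * B‖ * ‖w‖ := norm_mul_le (A * B) w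
  -- terms 2, 3
  have h_g : ‖T * (B * dn) * T‖ ≤ ‖T‖ * ‖B‖ * ‖T‖ * ‖dn‖ := by
    calc ‖T * (B * dn) * T‖ ≤ ‖T * (B * dn)‖ * ‖T‖ := norm_mul_le _ _
      _ ≤ (‖T‖ * ‖B * dn‖) * ‖T‖ :=
          mul_le_mul_of_nonneg_right (norm_mul_le _ _) (norm_nonneg _)
      _ ≤ (‖T‖ * (‖B‖ * ‖dn‖)) * ‖T‖ :=
          mul_le_mul_of_nonneg_right
            (mul_le_mul_of_nonneg_left (norm_mul_le _ _) (norm_nonneg _)) (norm_nonneg _)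
      _ = ‖T‖ * ‖B‖ * ‖T‖ * ‖dn‖ := by ring
  have h_h : ‖T * v * T‖ ≤ ‖T‖ * ‖T‖ * ‖v‖ := by
    calc ‖T * v * T‖ ≤ ‖T * v‖ * ‖T‖ := norm_mul_le _ _
      _ ≤ (‖T‖ * ‖v‖) * ‖T‖ :=
          mul_le_mul_of_nonneg_right (norm_mul_le _ _) (norm_nonneg _)
      _ = ‖T‖ * ‖T‖ * ‖v‖ := by ring
  linarith



/-- **Corollary 3.7.** Let `(X, 𝔸, d)` be a complete `C*`-algebra-valued `b`-metric space
with coefficient `A`, endowed with a graph `G` (edge relation `E` containing all loops),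
and let `f : X → X` satisfy `d (f x) (f y) ⪯ B ⬝ (d (f x) x + d (f y) y)` whenever
`(x, y)` is an edge of the symmetrized graph `G̃`, where `B` is a positive element of `𝔸`
commuting with every element of `𝔸` and `‖A ⬝ B‖ < 1/2`.  Suppose property (P3) holds.
Then:
(i) if `C_f ≠ ∅` then `f` has a fixed point;
(ii) if moreover property (P4) holds then `f` has a unique fixed point. -/
theorem fixed_point_of_cstar_bmetric_graph_kannan_contraction
    {X : Type*} {𝔸 : Type*} [CStarAlgebra 𝔸] [PartialOrder 𝔸] [StarOrderedRing 𝔸]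
    (d : X → X → 𝔸) (A : 𝔸)
    (hA_pos : 0 ≤ A) (hA_one : (1 : 𝔸) ≤ A)
    (hd_nonneg : ∀ x y, 0 ≤ d x y)
    (hd_eq_zero : ∀ x y, d x y = 0 ↔ x = y)
    (hd_symm : ∀ x y, d x y = d y x)
    (hd_triangle : ∀ x y z, d x y ≤ A * (d x z + d z y))
    -- `X` is complete
    (hcomplete : ∀ s : ℕ → X,
      (∀ ε : ℝ, 0 < ε → ∃ N, ∀ m ≥ N, ∀ n ≥ N, ‖d (s m) (s n)‖ < ε) →
      ∃ p, Filter.Tendsto (fun n => ‖d (s n) p‖) Filter.atTop (nhds 0))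
    (E : X → X → Prop) (hE_refl : ∀ x, E x x)
    (f : X → X) (B : 𝔸)
    (hB_pos : 0 ≤ B) (hB_central : ∀ a : 𝔸, B * a = a * B)
    (hcontr : ∀ x y, (E x y ∨ E y x) →
      d (f x) (f y) ≤ B * (d (f x) x + d (f y) y))
    (hnorm : ‖A * B‖ < 1 / 2)
    -- property (P3)
    (hP3 : ∀ (s : ℕ → X) (p : X),
      Filter.Tendsto (fun n => ‖d (s n) p‖) Filter.atTop (nhds 0) →
      (∀ n, E (s (n + 1)) (s n) ∨ E (s n) (s (n + 1))) →
      ∃ φ : ℕ → ℕ, StrictMono φ ∧ ∀ i, E (s (φ i)) p ∨ E p (s (φ i)))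
    -- `C_f ≠ ∅`
    (hC : ∃ x : X, ∀ m n : ℕ, E (f^[n] x) (f^[m] x) ∨ E (f^[m] x) (f^[n] x)) :
    (∃ x, f x = x) ∧
    -- property (P4) gives uniqueness of the fixed point
    ((∀ x y, f x = x → f y = y → (E x y ∨ E y x)) → ∃! x, f x = x) := by
  obtain ⟨x, hx⟩ := hC
  rcases subsingleton_or_nontrivial 𝔸 with hsub | hnt
  · -- trivial algebra: every map has every point fixed
    have hfix : ∀ y : X, f y = y := fun y => (hd_eq_zero (f y) y).mp (Subsingleton.elim _ _)
    exact ⟨⟨x, hfix x⟩, fun _ => ⟨x, hfix x, fun y _ => (hd_eq_zero y x).mp (Subsingleton.elim _ _)⟩⟩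
  -- main case
  set s : ℕ → X := fun n => f^[n] x with hs
  have hfs : ∀ n, s (n + 1) = f (s n) := fun n => Function.iterate_succ_apply' f n x
  have hedge : ∀ m n, E (s n) (s m) ∨ E (s m) (s n) := fun m n => hx m n
  have hstep : ∀ n m, d (s (n+1)) (s (m+1)) ≤ B * (d (s (n+1)) (s n) + d (s (m+1)) (s m)) := by
    intro n m
    have h := hcontr (s n) (s m) (hedge m n)
    rwa [← hfs n, ← hfs m] at h
  set r : ℕ → ℝ := fun n => ‖d (s (n+1)) (s n)‖ with hr
  set b : ℝ := ‖B‖ with hb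
  have hb0 : 0 ≤ b := norm_nonneg B
  have hBAB : B ≤ A * B := le_mul_left' hA_one hB_pos hB_central
  have hb2 : b < 1 / 2 :=
    lt_of_le_of_lt (CStarAlgebra.norm_le_norm_of_nonneg_of_le hB_pos hBAB) hnorm
  have hpair : ∀ n m, ‖d (s (n+1)) (s (m+1))‖ ≤ b * (r n + r m) := by
    intro n m
    calc ‖d (s (n+1)) (s (m+1))‖
        ≤ ‖B * (d (s (n+1)) (s n) + d (s (m+1)) (s m))‖ :=
          CStarAlgebra.norm_le_norm_of_nonneg_of_le (hd_nonneg _ _) (hstep n m)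
      _ ≤ b * ‖d (s (n+1)) (s n) + d (s (m+1)) (s m)‖ := norm_mul_le _ _
      _ ≤ b * (r n + r m) := mul_le_mul_of_nonneg_left (norm_add_le _ _) hb0
  set k : ℝ := b / (1 - b) with hk
  have h1b : 0 < 1 - b := by linarith
  have hk0 : 0 ≤ k := div_nonneg hb0 h1b.le
  have hk1 : k < 1 := by rw [hk, div_lt_one h1b]; linarith
  have hrk : ∀ n, r (n + 1) ≤ k * r n := by
    intro n
    have h := hpair (n + 1) n
    have hrn1 : r (n + 1) ≤ b * (r (n + 1) + r n) := h
    rw [hk, div_mul_eq_mul_div, le_div_iff₀ h1b]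
    nlinarith
  have hrgeom : ∀ n, r n ≤ k ^ n * r 0 := by
    intro n
    induction n with
    | zero => simp
    | succ n ih =>
      calc r (n + 1) ≤ k * r n := hrk n
        _ ≤ k * (k ^ n * r 0) := mul_le_mul_of_nonneg_left ih hk0
        _ = k ^ (n + 1) * r 0 := by ring
  have hr0 : Filter.Tendsto r Filter.atTop (nhds 0) := by
    apply squeeze_zero (fun n => norm_nonneg _) hrgeom
    have := (tendsto_pow_atTop_nhds_zero_of_lt_one hk0 hk1).mul_const (r 0)
    simpa using this
  -- Cauchy
  have hcauchy : ∀ ε : ℝ, 0 < ε → ∃ N, ∀ m ≥ N, ∀ n ≥ N, ‖d (s m) (s n)‖ < ε := by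
    intro ε hε
    have hε' : 0 < ε / (2 * b + 1) := by positivity
    obtain ⟨N, hN⟩ := (Metric.tendsto_atTop.mp hr0) (ε / (2 * b + 1)) hε'
    refine ⟨N + 1, fun m hm n hn => ?_⟩
    obtain ⟨m', rfl⟩ : ∃ m', m = m' + 1 := ⟨m - 1, by omega⟩
    obtain ⟨n', rfl⟩ : ∃ n', n = n' + 1 := ⟨n - 1, by omega⟩
    have hm' : r m' < ε / (2 * b + 1) := by
      have := hN m' (by omega); rwa [Real.dist_eq, sub_zero, abs_of_nonneg (norm_nonneg _)] at this
    have hn' : r n' < ε / (2 * b + 1) := by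
      have := hN n' (by omega); rwa [Real.dist_eq, sub_zero, abs_of_nonneg (norm_nonneg _)] at this
    have h := hpair m' n'
    have hfrac : b * (r m' + r n') < ε := by
      have h2 : b * (r m' + r n') ≤ b * (2 * (ε / (2 * b + 1))) := by nlinarith
      have h3 : b * (2 * (ε / (2 * b + 1))) < ε := by
        have hpos2 : (0:ℝ) < 2 * b + 1 := by linarith
        have hxx : (2 * b + 1) * (ε / (2 * b + 1)) = ε := mul_div_cancel₀ _ (ne_of_gt hpos2)
        nlinarith [hxx, hε']
      linarith
    exact lt_of_le_of_lt h hfrac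
  obtain ⟨p, hv⟩ := hcomplete s hcauchy
  obtain ⟨φ, hφmono, hφedge⟩ := hP3 s p hv (fun n => hedge n (n + 1))
  -- show f p = p
  set w : 𝔸 := d (f p) p with hw
  set C1 : ℝ := ‖CFC.sqrt A‖ * ‖B‖ * ‖CFC.sqrt A‖ with hC1
  set C2 : ℝ := ‖CFC.sqrt A‖ * ‖CFC.sqrt A‖ with hC2
  have hbound : ∀ i, ‖w‖ ≤ ‖A * B‖ * ‖w‖ + C1 * r (φ i) + C2 * ‖d (s (φ i + 1)) p‖ := by
    intro i
    have hedge' : E p (s (φ i)) ∨ E (s (φ i)) p := (hφedge i).symm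
    have h1 : d (f p) (s (φ i + 1)) ≤ B * (w + d (s (φ i + 1)) (s (φ i))) := by
      have h := hcontr p (s (φ i)) hedge'
      rwa [← hfs (φ i)] at h
    have h2 : w ≤ A * (d (f p) (s (φ i + 1)) + d (s (φ i + 1)) p) := hd_triangle _ _ _
    have := key_estimate hA_one hB_pos hB_central (hd_nonneg (f p) p)
      (hd_nonneg _ _) (hd_nonneg _ _) h1 h2
    calc ‖w‖ ≤ ‖A * B‖ * ‖w‖ + ‖CFC.sqrt A‖ * ‖B‖ * ‖CFC.sqrt A‖ * ‖d (s (φ i + 1)) (s (φ i))‖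
          + ‖CFC.sqrt A‖ * ‖CFC.sqrt A‖ * ‖d (s (φ i + 1)) p‖ := this
      _ = ‖A * B‖ * ‖w‖ + C1 * r (φ i) + C2 * ‖d (s (φ i + 1)) p‖ := rfl
  have ht1 : Filter.Tendsto (fun i => r (φ i)) Filter.atTop (nhds 0) :=
    hr0.comp hφmono.tendsto_atTop
  have ht2 : Filter.Tendsto (fun i => ‖d (s (φ i + 1)) p‖) Filter.atTop (nhds 0) := by
    refine hv.comp (Filter.tendsto_atTop_mono (fun i => ?_) hφmono.tendsto_atTop)
    exact Nat.le_succ (φ i)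
  have htg : Filter.Tendsto
      (fun i => ‖A * B‖ * ‖w‖ + C1 * r (φ i) + C2 * ‖d (s (φ i + 1)) p‖)
      Filter.atTop (nhds (‖A * B‖ * ‖w‖)) := by
    have := (tendsto_const_nhds (x := ‖A * B‖ * ‖w‖) (f := Filter.atTop (α := ℕ))).add
      ((ht1.const_mul C1).add (ht2.const_mul C2))
    simpa [add_assoc] using this
  have hwle : ‖w‖ ≤ ‖A * B‖ * ‖w‖ := ge_of_tendsto' htg hbound
  have hw0 : ‖w‖ = 0 := by nlinarith [norm_nonneg w]
  have hfp : f p = p := (hd_eq_zero (f p) p).mp (norm_eq_zero.mp hw0)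
  refine ⟨⟨p, hfp⟩, fun hP4 => ⟨p, hfp, fun y hy => ?_⟩⟩
  have h := hcontr y p (hP4 y p hy hfp)
  rw [hy, hfp] at h
  have hz : d y y = 0 := (hd_eq_zero y y).mpr rfl
  have hz' : d p p = 0 := (hd_eq_zero p p).mpr rfl
  rw [hz, hz', add_zero, mul_zero] at h
  exact (hd_eq_zero y p).mp (le_antisymm h (hd_nonneg y p))
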